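/- Let B ∈ ℂ^{n×n} be Hermitian, let i ≠ j be indices, and let U ∈ ℂ^{n×n} be a unitary matrix that agrees with the identity outside the {i,j}×{i,j} block and such that (U* B U)_{ij} = 0. Then off(U* B U) = off(B) − 2|b_{ij}|², where off(M) := Σ_{k≠ℓ} |m_{kℓ}|². -/

import Mathlib

open Matrix
open scoped ComplexOrder

noncomputable section


/-- `off(M) = Σ_{i ≠ j} |m_{ij}|²`, the squared Frobenius distance to the
nearest diagonal matrix. -/
def off {n : ℕ} (M : Matrix (Fin n) (Fin n) ℂ) : ℝ :=
  ∑ p ∈ (Finset.univ : Finset (Fin n)).offDiag, ‖M p.1 p.2‖ ^ 2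

lemma frob_eq_trace' {m : Type*} [Fintype m] (M : Matrix m m ℂ) :
    ∑ k, ∑ l, ‖M k l‖ ^ 2 = (Matrix.trace (M * Mᴴ)).re := by
  simp only [Matrix.trace, Matrix.diag, Matrix.mul_apply, Matrix.conjTranspose_apply,
    Complex.re_sum]
  congr 1; ext k; congr 1; ext l
  rw [show star (M k l) = (starRingEnd ℂ) (M k l) from rfl, Complex.mul_conj]
  simp [Complex.normSq_eq_norm_sq, ← Complex.ofReal_pow]

lemma frob_conj_eq' {m : Type*} [Fintype m] [DecidableEq m] (M V : Matrix m m ℂ)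
    (hV : Vᴴ * V = 1) :
    ∑ k, ∑ l, ‖(Vᴴ * M * V) k l‖ ^ 2 = ∑ k, ∑ l, ‖M k l‖ ^ 2 := by
  have hV' : V * Vᴴ = 1 := mul_eq_one_comm.mp hV
  rw [frob_eq_trace', frob_eq_trace']
  congr 1
  rw [Matrix.conjTranspose_mul, Matrix.conjTranspose_mul, Matrix.conjTranspose_conjTranspose]
  have h1 : Vᴴ * M * V * (Vᴴ * (Mᴴ * V)) = Vᴴ * (M * (Mᴴ * V)) := by
    simp only [Matrix.mul_assoc]
    rw [← Matrix.mul_assoc V Vᴴ, hV', Matrix.one_mul]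
  rw [h1, Matrix.trace_mul_comm]
  simp [Matrix.mul_assoc, hV']

lemma off_eq' {n : ℕ} (M : Matrix (Fin n) (Fin n) ℂ) :
    off M = (∑ k, ∑ l, ‖M k l‖ ^ 2) - ∑ k, ‖M k k‖ ^ 2 := by
  have h : ∑ k, ∑ l, ‖M k l‖ ^ 2 = ∑ k, ‖M k k‖ ^ 2 + off M := by
    rw [← Finset.sum_product', ← Finset.diag_union_offDiag,
      Finset.sum_union (Finset.disjoint_diag_offDiag _), Finset.sum_diag, off]
  rw [h]; ring

lemma sum_restrict_pair' {n : ℕ} {i j : Fin n} (hij : i ≠ j) (f : Fin 2 → Fin n)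
    (hf0 : f 0 = i) (hf1 : f 1 = j) (g : Fin n → ℂ)
    (hg : ∀ a, a ∉ ({i, j} : Finset (Fin n)) → g a = 0) :
    ∑ a, g a = ∑ b : Fin 2, g (f b) := by
  rw [Fin.sum_univ_two, hf0, hf1, ← Finset.sum_pair hij]
  exact (Finset.sum_subset (Finset.subset_univ _) (fun a _ ha => hg a ha)).symm

/-- for Hermitian `B` and a unitary `U` agreeing with the identity
outside the `{i,j} × {i,j}` block and annihilating the `(i,j)` entry,
`off(U* B U) = off(B) − 2|b_{ij}|²`. -/
theorem off_jacobi_update {n : ℕ} (B U : Matrix (Fin n) (Fin n) ℂ)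
    (hB : B.IsHermitian) (i j : Fin n) (hij : i ≠ j)
    (hU : Uᴴ * U = 1)
    (hUid : ∀ a b, ¬(a ∈ ({i, j} : Finset (Fin n)) ∧ b ∈ ({i, j} : Finset (Fin n))) →
      U a b = if a = b then 1 else 0)
    (hzero : (Uᴴ * B * U) i j = 0) :
    off (Uᴴ * B * U) = off B - 2 * ‖B i j‖ ^ 2 := by
  set f : Fin 2 → Fin n := ![i, j] with hf
  have hf0 : f 0 = i := rfl
  have hf1 : f 1 = j := rfl
  have hfmem : ∀ p : Fin 2, f p ∈ ({i, j} : Finset (Fin n)) := by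
    intro p; fin_cases p <;> simp [hf]
  have hfinj : ∀ p q : Fin 2, f p = f q → p = q := by
    intro p q h
    fin_cases p <;> fin_cases q <;>
      simp only [hf, Matrix.cons_val_zero, Matrix.cons_val_one, Matrix.head_cons] at h ⊢ <;>
      first | rfl | exact absurd h hij | exact absurd h.symm hij
  have hUzero : ∀ (a : Fin n), a ∉ ({i, j} : Finset (Fin n)) → ∀ p : Fin 2, U a (f p) = 0 := by
    intro a ha p
    rw [hUid a (f p) (fun h => ha h.1), if_neg]
    intro h; exact ha (h ▸ hfmem p)
  have hVU : (U.submatrix f f)ᴴ * (U.submatrix f f) = 1 := by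
    ext p q
    simp only [Matrix.mul_apply, Matrix.conjTranspose_apply, Matrix.submatrix_apply]
    rw [← sum_restrict_pair' hij f hf0 hf1 (fun a => star (U a (f p)) * U a (f q))
      (fun a ha => show star (U a (f p)) * U a (f q) = 0 by
        rw [hUzero a ha p, star_zero, zero_mul])]
    have h1 : ∑ a, star (U a (f p)) * U a (f q) = (Uᴴ * U) (f p) (f q) := by
      simp [Matrix.mul_apply, Matrix.conjTranspose_apply]
    rw [h1, hU, Matrix.one_apply, Matrix.one_apply]
    by_cases h : p = q
    · simp [h]
    · rw [if_neg h, if_neg (fun hc => h (hfinj p q hc))]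
  have hblock : (Uᴴ * B * U).submatrix f f
      = (U.submatrix f f)ᴴ * (B.submatrix f f) * (U.submatrix f f) := by
    ext p q
    simp only [Matrix.submatrix_apply, Matrix.mul_apply, Matrix.conjTranspose_apply]
    rw [sum_restrict_pair' hij f hf0 hf1
      (fun b => (∑ a, star (U a (f p)) * B a b) * U b (f q))
      (fun b hb => show (∑ a, star (U a (f p)) * B a b) * U b (f q) = 0 by
        rw [hUzero b hb q, mul_zero])]
    refine Finset.sum_congr rfl fun b _ => ?_
    congr 1
    exact sum_restrict_pair' hij f hf0 hf1 (fun a => star (U a (f p)) * B a (f b))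
      (fun a ha => show star (U a (f p)) * B a (f b) = 0 by
        rw [hUzero a ha p, star_zero, zero_mul])
  have hdiagout : ∀ k, k ∉ ({i, j} : Finset (Fin n)) → (Uᴴ * B * U) k k = B k k := by
    intro k hk
    have hk' : ∀ b, U b k = if b = k then 1 else 0 := fun b => hUid b k (fun h => hk h.2)
    simp only [Matrix.mul_apply, Matrix.conjTranspose_apply]
    simp [hk']
  set B' := Uᴴ * B * U with hB'
  -- B' is Hermitian
  have hB'h : B'.IsHermitian := Matrix.isHermitian_conjTranspose_mul_mul U hB
  have hB'ji : B' j i = 0 := by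
    have h := hB'h.apply j i
    rw [← h, hzero, star_zero]
  have hBji : ‖B j i‖ = ‖B i j‖ := by
    rw [← hB.apply j i, norm_star]
  -- full Frobenius equality
  have hT : ∑ k, ∑ l, ‖B' k l‖ ^ 2 = ∑ k, ∑ l, ‖B k l‖ ^ 2 :=
    frob_conj_eq' B U hU
  -- block Frobenius equality
  have hblockF : ∑ p, ∑ q, ‖(B'.submatrix f f) p q‖ ^ 2
      = ∑ p, ∑ q, ‖(B.submatrix f f) p q‖ ^ 2 := by
    rw [hB', hblock]
    exact frob_conj_eq' (B.submatrix f f) (U.submatrix f f) hVU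
  have hdiagblock : ‖B' i i‖ ^ 2 + ‖B' j j‖ ^ 2
      = ‖B i i‖ ^ 2 + ‖B j j‖ ^ 2 + 2 * ‖B i j‖ ^ 2 := by
    have h1 := hblockF
    simp only [Fin.sum_univ_two, Matrix.submatrix_apply, hf0, hf1] at h1
    rw [hzero, hB'ji] at h1
    simp only [norm_zero] at h1
    rw [hBji] at h1
    ring_nf at h1 ⊢
    linarith
  -- diagonal sums split
  have hsplit : ∀ (M : Matrix (Fin n) (Fin n) ℂ),
      ∑ k, ‖M k k‖ ^ 2 = (‖M i i‖ ^ 2 + ‖M j j‖ ^ 2)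
        + ∑ k ∈ ({i, j} : Finset (Fin n))ᶜ, ‖M k k‖ ^ 2 := by
    intro M
    rw [← Finset.sum_add_sum_compl ({i, j} : Finset (Fin n)) (fun k => ‖M k k‖ ^ 2),
      Finset.sum_pair hij]
  have hrest : ∑ k ∈ ({i, j} : Finset (Fin n))ᶜ, ‖B' k k‖ ^ 2
      = ∑ k ∈ ({i, j} : Finset (Fin n))ᶜ, ‖B k k‖ ^ 2 := by
    refine Finset.sum_congr rfl fun k hk => ?_
    rw [hdiagout k (Finset.mem_compl.mp hk)]
  rw [off_eq', off_eq', hT, hsplit B', hsplit B, hrest, hdiagblock]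
  ring
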